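/- arXiv:2404.05230 — 2 statements merged into one kernel-verified Lean document; each statement's English description precedes it below -/
import Mathlib

section
/- Let $s\in\mathbb{N}$ and let $\mathbb{S}\subseteq\mathbb{R}^s$ be nonempty and convex. Fix $\lambda\in[0,1]$ and define $v_1^{(\lambda)}(a,b,c):=(a,b,\lambda a+(1-\lambda)c)$, and $v_2(a,b,c):=a$ if $a=b=c$ and otherwise $v_2(a,b,c):=\frac{\|c-a\|}{\|c-a\|+\|b-a\|}c+\left(1-\frac{\|c-a\|}{\|c-a\|+\|b-a\|}\right)b$, and $v^{(\lambda)}:=v_2\circ v_1^{(\lambda)}$. Then for all $(a,b,c)\in\mathbb{S}^3$ one has $\|v^{(\lambda)}(a,b,c)-c\|\le\|b-a\|+\lambda\|c-a\|$ and $\|v^{(\lambda)}(a,b,c)-b\|\le(1-\lambda)\|c-a\|$. -/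
noncomputable section
open Classical in

/-- The map `v₂` from the Euclidean-geometry lemma. -/
def v2 {E : Type*} [NormedAddCommGroup E] [NormedSpace ℝ E] (a b c : E) : E :=
  if a = b ∧ b = c then a
  else (‖c - a‖ / (‖c - a‖ + ‖b - a‖)) • c + (1 - ‖c - a‖ / (‖c - a‖ + ‖b - a‖)) • b

/-- The map `v^{(λ)} = v₂ ∘ v₁^{(λ)}`, where `v₁^{(λ)}(a,b,c) = (a, b, λa + (1-λ)c)`. -/
def vlam {E : Type*} [NormedAddCommGroup E] [NormedSpace ℝ E] (lam : ℝ) (a b c : E) : E :=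
  v2 a b (lam • a + (1 - lam) • c)

end

theorem stmt0' {E : Type*} [NormedAddCommGroup E] [NormedSpace ℝ E]
    (lam : ℝ) (hlam : lam ∈ Set.Icc (0 : ℝ) 1) (a b c : E) :
    ‖vlam lam a b c - c‖ ≤ ‖b - a‖ + lam * ‖c - a‖ ∧
    ‖vlam lam a b c - b‖ ≤ (1 - lam) * ‖c - a‖ := by
  obtain ⟨h0, h1⟩ := hlam
  set c' : E := lam • a + (1 - lam) • c with hc'def
  have hca : c' - a = (1 - lam) • (c - a) := by
    rw [hc'def]; module
  have hcc : c' - c = lam • (a - c) := by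
    rw [hc'def]; module
  have hnca : ‖c' - a‖ = (1 - lam) * ‖c - a‖ := by
    rw [hca, norm_smul, Real.norm_eq_abs, abs_of_nonneg (by linarith)]
  have hncc : ‖c' - c‖ = lam * ‖c - a‖ := by
    rw [hcc, norm_smul, Real.norm_eq_abs, abs_of_nonneg h0, norm_sub_rev]
  unfold vlam v2
  rw [← hc'def]
  split_ifs with h
  · obtain ⟨hab, hbc⟩ := h
    have hac' : a = c' := hab.trans hbc
    have e1 : ‖a - c‖ = ‖c' - c‖ := by rw [← hac']
    constructor
    · rw [e1, hncc, ← hab, sub_self, norm_zero, zero_add]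
    · rw [← hab, sub_self, norm_zero]
      exact mul_nonneg (by linarith) (norm_nonneg _)
  · have hD : 0 < ‖c' - a‖ + ‖b - a‖ := by
      rcases lt_or_eq_of_le (add_nonneg (norm_nonneg (c' - a)) (norm_nonneg (b - a))) with h' | h'
      · exact h'
      · exfalso
        have h1 : ‖c' - a‖ = 0 := by nlinarith [norm_nonneg (c' - a), norm_nonneg (b - a)]
        have h2 : ‖b - a‖ = 0 := by nlinarith [norm_nonneg (c' - a), norm_nonneg (b - a)]
        rw [norm_eq_zero, sub_eq_zero] at h1 h2
        exact h ⟨h2.symm, h2.trans h1.symm⟩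
    set t : ℝ := ‖c' - a‖ / (‖c' - a‖ + ‖b - a‖) with htdef
    have htD : t * (‖c' - a‖ + ‖b - a‖) = ‖c' - a‖ := div_mul_cancel₀ _ hD.ne'
    have ht1D : (1 - t) * (‖c' - a‖ + ‖b - a‖) = ‖b - a‖ := by
      rw [htdef]; field_simp; ring
    have ht0 : 0 ≤ t := div_nonneg (norm_nonneg _) hD.le
    have ht1 : t ≤ 1 := by
      rw [htdef, div_le_one hD]
      exact le_add_of_nonneg_right (norm_nonneg _)
    have hcb : ‖c' - b‖ ≤ ‖c' - a‖ + ‖b - a‖ := by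
      calc ‖c' - b‖ = ‖(c' - a) + (a - b)‖ := by abel_nf
        _ ≤ ‖c' - a‖ + ‖a - b‖ := norm_add_le _ _
        _ = ‖c' - a‖ + ‖b - a‖ := by rw [norm_sub_rev a b]
    have hvb : t • c' + (1 - t) • b - b = t • (c' - b) := by module
    have hvc' : t • c' + (1 - t) • b - c' = (1 - t) • (b - c') := by module
    have hvbn : ‖t • c' + (1 - t) • b - b‖ ≤ (1 - lam) * ‖c - a‖ := by
      rw [hvb, norm_smul, Real.norm_eq_abs, abs_of_nonneg ht0, ← hnca, ← htD]
      exact mul_le_mul_of_nonneg_left hcb ht0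
    refine ⟨?_, hvbn⟩
    calc ‖t • c' + (1 - t) • b - c‖
        = ‖(t • c' + (1 - t) • b - c') + (c' - c)‖ := by abel_nf
      _ ≤ ‖t • c' + (1 - t) • b - c'‖ + ‖c' - c‖ := norm_add_le _ _
      _ ≤ ‖b - a‖ + lam * ‖c - a‖ := by
          rw [hvc', norm_smul, Real.norm_eq_abs, abs_of_nonneg (by linarith), hncc]
          gcongr
          rw [← ht1D, norm_sub_rev]
          exact mul_le_mul_of_nonneg_left hcb (by linarith)

/-- for every `λ ∈ [0,1]` and `(a,b,c) ∈ 𝕊³` (with `𝕊 ⊆ ℝ^s` nonempty convex),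
`‖v^{(λ)}(a,b,c) - c‖ ≤ ‖b-a‖ + λ‖c-a‖` and `‖v^{(λ)}(a,b,c) - b‖ ≤ (1-λ)‖c-a‖`. -/
theorem stmt0 (s : ℕ) (hs : 0 < s) (S : Set (EuclideanSpace ℝ (Fin s)))
    (hS : S.Nonempty) (hconv : Convex ℝ S)
    (lam : ℝ) (hlam : lam ∈ Set.Icc (0 : ℝ) 1)
    (a b c : EuclideanSpace ℝ (Fin s)) (ha : a ∈ S) (hb : b ∈ S) (hc : c ∈ S) :
    ‖vlam lam a b c - c‖ ≤ ‖b - a‖ + lam * ‖c - a‖ ∧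
    ‖vlam lam a b c - b‖ ≤ (1 - lam) * ‖c - a‖ :=
  stmt0' lam hlam a b c
end

section
/- Let $\mathcal{X}$ be a metric space with metric $d_{\mathcal{X}}$, $\mathbb{S}\subseteq\mathbb{R}^s$ nonempty, closed, convex, and suppose $\widehat{\theta}:\mathcal{X}\to\mathbb{S}$ is Lipschitz with constant $L_{\widehat{\theta}}$ and $\varepsilon:\mathcal{X}\to[0,\bar{\varepsilon}]$ is Lipschitz with constant $L_{\varepsilon}$. Define $\Gamma(x):=\{\theta\in\mathbb{S}:\|\theta-\widehat{\theta}(x)\|\le\varepsilon(x)\}$. Then for all $x,\widetilde{x}\in\mathcal{X}$ and all $\theta\in\Gamma(x)$ there exists $\widetilde{\theta}\in\Gamma(\widetilde{x})$ with $\|\theta-\widetilde{\theta}\|\le(L_{\widehat{\theta}}+L_{\varepsilon})\,d_{\mathcal{X}}(x,\widetilde{x})$. -/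
/-- for Lipschitz center `θ̂` and Lipschitz radius `ε`, the balls-in-`𝕊`
correspondence `Γ(x) = {θ ∈ 𝕊 : ‖θ - θ̂(x)‖ ≤ ε(x)}` satisfies the Lipschitz selection
property with constant `L_θ̂ + L_ε`. -/
theorem stmt7 {X : Type*} [MetricSpace X] (s : ℕ) (hs : 0 < s)
    (S : Set (EuclideanSpace ℝ (Fin s))) (hS : S.Nonempty) (hScl : IsClosed S)
    (hSconv : Convex ℝ S)
    (θhat : X → EuclideanSpace ℝ (Fin s)) (hθS : ∀ x, θhat x ∈ S)
    (Lθ : ℝ) (hLθ : 0 ≤ Lθ) (hθLip : ∀ x x' : X, ‖θhat x - θhat x'‖ ≤ Lθ * dist x x')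
    (εbar : ℝ) (hεbar : 0 < εbar) (ε : X → ℝ) (hε : ∀ x, ε x ∈ Set.Icc 0 εbar)
    (Lε : ℝ) (hLε : 0 ≤ Lε) (hεLip : ∀ x x' : X, |ε x - ε x'| ≤ Lε * dist x x') :
    ∀ x x' : X, ∀ θ ∈ {θ ∈ S | ‖θ - θhat x‖ ≤ ε x},
      ∃ θ' ∈ {θ' ∈ S | ‖θ' - θhat x'‖ ≤ ε x'},
        ‖θ - θ'‖ ≤ (Lθ + Lε) * dist x x' := by
  intro x x' θ hθ
  obtain ⟨hθs, hθb⟩ := hθ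
  have hd : (0:ℝ) ≤ dist x x' := dist_nonneg
  have hε'0 : 0 ≤ ε x' := (hε x').1
  have hεd : ε x - ε x' ≤ Lε * dist x x' := le_trans (le_abs_self _) (hεLip x x')
  set r := ‖θ - θhat x'‖ with hr
  have hrle : r ≤ ε x + Lθ * dist x x' := by
    have : θ - θhat x' = (θ - θhat x) + (θhat x - θhat x') := by abel
    calc r = ‖(θ - θhat x) + (θhat x - θhat x')‖ := by rw [hr, this]
      _ ≤ ‖θ - θhat x‖ + ‖θhat x - θhat x'‖ := norm_add_le _ _
      _ ≤ ε x + Lθ * dist x x' := add_le_add hθb (hθLip x x')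
  by_cases hcase : r ≤ ε x'
  · refine ⟨θ, ⟨hθs, hcase⟩, ?_⟩
    simp only [sub_self, norm_zero]
    positivity
  · push_neg at hcase
    have hrpos : 0 < r := lt_of_le_of_lt hε'0 hcase
    set t := ε x' / r with htdef
    have ht0 : 0 ≤ t := div_nonneg hε'0 hrpos.le
    have ht1 : t ≤ 1 := (div_le_one hrpos).2 hcase.le
    refine ⟨(1 - t) • θhat x' + t • θ,
      ⟨hSconv (hθS x') hθs (by linarith) ht0 (by ring), ?_⟩, ?_⟩
    · have h1 : (1 - t) • θhat x' + t • θ - θhat x' = t • (θ - θhat x') := by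
        rw [smul_sub]; module
      rw [h1, norm_smul, Real.norm_eq_abs, abs_of_nonneg ht0, ← hr, htdef,
        div_mul_cancel₀ _ hrpos.ne']
    · have h2 : θ - ((1 - t) • θhat x' + t • θ) = (1 - t) • (θ - θhat x') := by
        rw [smul_sub]; module
      rw [h2, norm_smul, Real.norm_eq_abs, abs_of_nonneg (by linarith : (0:ℝ) ≤ 1 - t), ← hr]
      have h3 : (1 - t) * r = r - ε x' := by
        rw [htdef]; field_simp
      rw [h3]
      linarith
end
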